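/- In the category Gpd of groupoids, if g : A → B is a fibration (an isofibration: every isomorphism in B with a lift of its domain lifts to A) and f : C → B is an injective-on-objects equivalence of groupoids, then the pullback of f along g is again an injective-on-objects equivalence of groupoids. -/

import Mathlib

open CategoryTheory

universe u

/-- Isofibration of groupoids. -/
def IsIsoFib {A B : Type*} [Category A] [Category B] (g : A ⥤ B) : Prop :=
  ∀ (x : A) (b : B) (φ : g.obj x ≅ b), ∃ (y : A) (ψ : x ≅ y) (h : g.obj y = b),
    g.map ψ.hom = φ.hom ≫ eqToHom h.symm

section Aux

universe w v₁ u₁ v₂ u₂ uX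

/-- A discrete groupoid on `X` with homs in an arbitrary universe `w`. -/
def Disc (X : Type uX) : Type uX := X

instance Disc.groupoid.{w', uX'} {X : Type uX'} : Groupoid.{w'} (Disc X) where
  Hom x y := ULift.{w'} (PLift (x = y))
  id _ := ⟨⟨rfl⟩⟩
  comp u v := ⟨⟨u.down.down.trans v.down.down⟩⟩
  inv u := ⟨⟨u.down.down.symm⟩⟩
  id_comp _ := rfl
  comp_id _ := rfl
  assoc _ _ _ := rfl
  inv_comp _ := rfl
  comp_inv _ := rfl

/-- A functor out of the discrete groupoid, from a function on objects. -/
def Disc.mk.{w', v₁', u₁', uX'} {X : Type uX'} {D : Type u₁'} [Groupoid.{v₁'} D] (o : X → D) :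
    @Functor (Disc X) (Disc.groupoid.{w', uX'}).toCategory D _ where
  obj := o
  map m := eqToHom (congrArg o m.down.down)
  map_id _ := by simp
  map_comp _ _ := by simp

lemma Disc.mk_comp {X : Type uX} {D : Type u₁} [Groupoid.{v₁} D] {E : Type u₂}
    [Groupoid.{v₂} E] (o : X → D) (F : D ⥤ E) :
    Disc.mk.{w} o ⋙ F = Disc.mk.{w} (fun x => F.obj (o x)) := by
  refine CategoryTheory.Functor.ext (fun x => rfl) ?_
  intro x y m
  rcases m with ⟨⟨h⟩⟩
  subst h
  simp [Disc.mk]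
  rfl

/-- The "interval" groupoid: two objects, a unique isomorphism between any two,
with homs in an arbitrary universe `w`. -/
def IGrpd : Type u := ULift Bool

instance IGrpd.groupoid.{w', u'} : Groupoid.{w'} IGrpd.{u'} where
  Hom _ _ := PUnit.{w' + 1}
  id _ := ⟨⟩
  comp _ _ := ⟨⟩
  inv _ := ⟨⟩
  id_comp _ := rfl
  comp_id _ := rfl
  assoc _ _ _ := rfl
  inv_comp _ := rfl
  comp_inv _ := rfl

/-- The family of arrows determined by a single arrow `φ`. -/
def arrOf {D : Type u₁} [Groupoid.{v₁} D] {x y : D} (φ : x ⟶ y) :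
    ∀ a b : Bool, (cond a y x) ⟶ (cond b y x)
  | false, false => 𝟙 x
  | false, true => φ
  | true, false => Groupoid.inv φ
  | true, true => 𝟙 y

/-- The functor out of the interval groupoid classifying an arrow. -/
def IGrpd.mk.{w', v₁', u₁', u'} {D : Type u₁'} [Groupoid.{v₁'} D] {x y : D} (φ : x ⟶ y) :
    @Functor IGrpd.{u'} (IGrpd.groupoid.{w', u'}).toCategory D _ where
  obj b := cond b.down y x
  map {a b} _ := arrOf φ a.down b.down
  map_id a := by obtain ⟨a⟩ := a; cases a <;> rfl
  map_comp {a b c} _ _ := by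
    obtain ⟨a⟩ := a; obtain ⟨b⟩ := b; obtain ⟨c⟩ := c
    cases a <;> cases b <;> cases c <;>
      simp [arrOf, Groupoid.inv_eq_inv]

lemma IGrpd.mk_comp {D : Type u₁} [Groupoid.{v₁} D] {E : Type u₂} [Groupoid.{v₂} E]
    {x y : D} (φ : x ⟶ y) (F : D ⥤ E) :
    IGrpd.mk.{w, v₁, u₁, u} φ ⋙ F = IGrpd.mk.{w, v₂, u₂, u} (F.map φ) := by
  refine CategoryTheory.Functor.ext (fun b => ?_) ?_
  · obtain ⟨b⟩ := b; cases b <;> rfl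
  · intro a b m
    rw [Functor.comp_map]
    obtain ⟨a⟩ := a; obtain ⟨b⟩ := b
    cases a <;> cases b <;>
      simp [IGrpd.mk, arrOf, Groupoid.inv_eq_inv, Functor.comp_map]
    · exact (Category.comp_id _).symm
    · exact (Category.id_comp _).symm
    · rfl
    · exact (Category.comp_id _).symm

lemma IGrpd.mk_conj {D : Type u₁} [Groupoid.{v₁} D] {x y x' y' : D}
    (hx : x = x') (hy : y = y') (φ : x ⟶ y) :
    IGrpd.mk.{w, v₁, u₁, u} (eqToHom hx.symm ≫ φ ≫ eqToHom hy)
      = IGrpd.mk.{w, v₁, u₁, u} φ := by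
  subst hx; subst hy; simp

end Aux

/-- the pullback of an injective-on-objects equivalence of groupoids
along an isofibration is again an injective-on-objects equivalence. -/
theorem stmt1 {A B C P : Type u} [Groupoid A] [Groupoid B] [Groupoid C] [Groupoid P]
    (g : A ⥤ B) (f : C ⥤ B)
    (hg : IsIsoFib g)
    (hfinj : Function.Injective f.obj) (hfeq : f.IsEquivalence)
    (p₁ : P ⥤ A) (p₂ : P ⥤ C)
    (hcomm : p₁ ⋙ g = p₂ ⋙ f)
    (huniv : ∀ (Q : Type u) [Groupoid Q] (q₁ : Q ⥤ A) (q₂ : Q ⥤ C),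
      q₁ ⋙ g = q₂ ⋙ f → ∃! u : Q ⥤ P, u ⋙ p₁ = q₁ ∧ u ⋙ p₂ = q₂) :
    Function.Injective p₁.obj ∧ p₁.IsEquivalence := by
  have hffull := hfeq.full
  have hffaith := hfeq.faithful
  have hfess := hfeq.essSurj
  have hx : ∀ z : P, g.obj (p₁.obj z) = f.obj (p₂.obj z) := fun z =>
    Functor.congr_obj hcomm z
  -- objects of P are determined by their two projections
  have hinj2 : ∀ x y : P, p₁.obj x = p₁.obj y → p₂.obj x = p₂.obj y → x = y := by
    intro x y h1 h2
    have hc : Disc.mk (fun _ : PUnit.{u + 1} => p₁.obj x) ⋙ g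
        = Disc.mk (fun _ => p₂.obj x) ⋙ f := by
      rw [Disc.mk_comp, Disc.mk_comp]
      simp only [hx x]
    obtain ⟨w, -, hw⟩ := huniv _ _ _ hc
    have e1 : Disc.mk (fun _ : PUnit.{u + 1} => x) = w :=
      hw _ ⟨by rw [Disc.mk_comp], by rw [Disc.mk_comp]⟩
    have e2 : Disc.mk (fun _ : PUnit.{u + 1} => y) = w :=
      hw _ ⟨by rw [Disc.mk_comp]; simp only [h1], by rw [Disc.mk_comp]; simp only [h2]⟩
    exact Functor.congr_obj (e1.trans e2.symm) PUnit.unit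
  -- injectivity on objects
  have hinj : Function.Injective p₁.obj := by
    intro a b h
    refine hinj2 _ _ h (hfinj ?_)
    rw [← hx a, ← hx b, h]
  -- essential surjectivity
  have hess : p₁.EssSurj := by
    constructor
    intro a
    obtain ⟨c, ⟨e⟩⟩ := Functor.EssSurj.mem_essImage (F := f) (g.obj a)
    obtain ⟨y, ψ, h, -⟩ := hg a (f.obj c) e.symm
    have hc : Disc.mk (fun _ : PUnit.{u + 1} => y) ⋙ g = Disc.mk (fun _ => c) ⋙ f := by
      rw [Disc.mk_comp, Disc.mk_comp]
      simp only [h]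
    obtain ⟨w, ⟨hw1, hw2⟩, -⟩ := huniv _ _ _ hc
    refine ⟨w.obj PUnit.unit, ⟨?_⟩⟩
    have h1 : p₁.obj (w.obj PUnit.unit) = y := Functor.congr_obj hw1 PUnit.unit
    exact eqToIso h1 ≪≫ ψ.symm
  -- fullness
  have hfull : p₁.Full := by
    constructor
    intro x y β
    have hfγ : f.map (f.preimage (eqToHom (hx x).symm ≫ g.map β ≫ eqToHom (hx y)))
        = eqToHom (hx x).symm ≫ g.map β ≫ eqToHom (hx y) := f.map_preimage _
    set γ := f.preimage (eqToHom (hx x).symm ≫ g.map β ≫ eqToHom (hx y)) with hγdef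
    have hc : IGrpd.mk β ⋙ g = IGrpd.mk γ ⋙ f := by
      rw [IGrpd.mk_comp, IGrpd.mk_comp, hfγ, IGrpd.mk_conj (hx x) (hx y)]
    obtain ⟨w, ⟨hw1, hw2⟩, -⟩ := huniv _ _ _ hc
    have ex : w.obj ⟨false⟩ = x :=
      hinj2 _ _ (Functor.congr_obj hw1 ⟨false⟩) (Functor.congr_obj hw2 ⟨false⟩)
    have ey : w.obj ⟨true⟩ = y :=
      hinj2 _ _ (Functor.congr_obj hw1 ⟨true⟩) (Functor.congr_obj hw2 ⟨true⟩)
    refine ⟨eqToHom ex.symm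
      ≫ w.map (X := (⟨false⟩ : IGrpd.{u})) (Y := (⟨true⟩ : IGrpd.{u})) PUnit.unit
      ≫ eqToHom ey, ?_⟩
    have hm := Functor.congr_hom hw1
      (X := (⟨false⟩ : IGrpd.{u})) (Y := (⟨true⟩ : IGrpd.{u})) PUnit.unit
    have hmk : (IGrpd.mk β).map (X := (⟨false⟩ : IGrpd.{u})) (Y := (⟨true⟩ : IGrpd.{u}))
        PUnit.unit = β := rfl
    rw [hmk] at hm
    change p₁.map (w.map (X := (⟨false⟩ : IGrpd.{u})) (Y := (⟨true⟩ : IGrpd.{u}))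
      PUnit.unit) = _ at hm
    simp [hm, eqToHom_map]
    erw [Category.assoc, eqToHom_trans]
    change 𝟙 _ ≫ β ≫ 𝟙 _ = β
    simp
  -- faithfulness
  have hfaith : p₁.Faithful := by
    constructor
    intro x y φ ψ hpe
    have hφ := Functor.congr_hom hcomm φ
    have hψ := Functor.congr_hom hcomm ψ
    simp only [Functor.comp_map] at hφ hψ
    have h2 : p₂.map φ = p₂.map ψ := by
      apply f.map_injective
      have h3 : eqToHom (hx x) ≫ f.map (p₂.map φ) ≫ eqToHom (hx y).symm
          = eqToHom (hx x) ≫ f.map (p₂.map ψ) ≫ eqToHom (hx y).symm := by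
        rw [← hφ, ← hψ, hpe]
      have h4 := (cancel_epi (eqToHom (hx x))).mp h3
      exact (cancel_mono (eqToHom (hx y).symm)).mp h4
    have hc : IGrpd.mk (p₁.map φ) ⋙ g = IGrpd.mk (p₂.map φ) ⋙ f := by
      rw [IGrpd.mk_comp, IGrpd.mk_comp]
      have h5 : f.map (p₂.map φ)
          = eqToHom (hx x).symm ≫ g.map (p₁.map φ) ≫ eqToHom (hx y) := by
        rw [hφ]; simp
      rw [h5, IGrpd.mk_conj (hx x) (hx y)]
    obtain ⟨w, -, hw⟩ := huniv _ _ _ hc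
    have e1 : IGrpd.mk φ = w :=
      hw _ ⟨by rw [IGrpd.mk_comp], by rw [IGrpd.mk_comp]⟩
    have e2 : IGrpd.mk ψ = w :=
      hw _ ⟨by rw [IGrpd.mk_comp, hpe], by rw [IGrpd.mk_comp, h2]⟩
    have := Functor.congr_hom (e1.trans e2.symm)
      (X := (⟨false⟩ : IGrpd.{u})) (Y := (⟨true⟩ : IGrpd.{u})) PUnit.unit
    change φ = 𝟙 _ ≫ ψ ≫ 𝟙 _ at this
    simpa using this
  exact ⟨hinj, { faithful := hfaith, full := hfull, essSurj := hess }⟩
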